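/- arXiv:1301.4550 — 8 statements merged into one kernel-verified Lean document; each statement's English description precedes it below -/
import Mathlib

section
/- Let X have main blocks X_1,...,X_n with sizes q_1,...,q_n and additional block Y of size 1. The number of (n+1)-element subsets of X ∪ Y meeting every main block equals q_1·q_2···q_n · (q_1 + q_2 + ... + q_n − n + 2)/2. -/
open Finset

lemma two_mul_choose_two (m : ℕ) : 2 * m.choose 2 = m * (m - 1) := by
  have h2 : 2 ∣ m * (m - 1) := by
    rcases m with _ | k
    · simp
    · simpa [Nat.mul_comm] using (Nat.even_mul_succ_self k).two_dvd
  rw [Nat.choose_two_right, Nat.mul_div_cancel' h2]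

lemma all_one {ι : Type} [DecidableEq ι] (s : Finset ι) (f : ι → ℕ)
    (h1 : ∀ i ∈ s, 1 ≤ f i) (hsum : ∑ i ∈ s, f i = s.card) :
    ∀ i ∈ s, f i = 1 := by
  intro j hj
  by_contra h
  have h2 : 2 ≤ f j := by have := h1 j hj; omega
  have he : f j + ∑ i ∈ s.erase j, f i = ∑ i ∈ s, f i := Finset.add_sum_erase s f hj
  have hle : (s.erase j).card * 1 ≤ ∑ i ∈ s.erase j, f i := by
    simpa using Finset.card_nsmul_le_sum (s.erase j) f 1 (fun i hi => h1 i (Finset.mem_of_mem_erase hi))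
  have hc : (s.erase j).card = s.card - 1 := Finset.card_erase_of_mem hj
  have hpos : 1 ≤ s.card := Finset.card_pos.mpr ⟨j, hj⟩
  omega

lemma exists_two {ι : Type} [DecidableEq ι] (s : Finset ι) (f : ι → ℕ)
    (h1 : ∀ i ∈ s, 1 ≤ f i) (hsum : ∑ i ∈ s, f i = s.card + 1) :
    ∃ j ∈ s, f j = 2 ∧ ∀ i ∈ s, i ≠ j → f i = 1 := by
  have hj : ∃ j ∈ s, 2 ≤ f j := by
    by_contra h
    push_neg at h
    have : ∑ i ∈ s, f i = ∑ i ∈ s, 1 := Finset.sum_congr rfl (fun i hi => by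
      have := h1 i hi; have := h i hi; omega)
    simp at this
    omega
  obtain ⟨j, hjs, hj2⟩ := hj
  have he : f j + ∑ i ∈ s.erase j, f i = ∑ i ∈ s, f i := Finset.add_sum_erase s f hjs
  have hle : (s.erase j).card * 1 ≤ ∑ i ∈ s.erase j, f i := by
    simpa using Finset.card_nsmul_le_sum (s.erase j) f 1 (fun i hi => h1 i (Finset.mem_of_mem_erase hi))
  have hc : (s.erase j).card = s.card - 1 := Finset.card_erase_of_mem hjs
  have hpos : 1 ≤ s.card := Finset.card_pos.mpr ⟨j, hjs⟩
  have hsum2 : ∑ i ∈ s.erase j, f i = (s.erase j).card := by omega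
  have hone := all_one (s.erase j) f (fun i hi => h1 i (Finset.mem_of_mem_erase hi)) hsum2
  refine ⟨j, hjs, by omega, fun i hi hij => hone i (Finset.mem_erase.mpr ⟨hij, hi⟩)⟩
open Finset

lemma card_eq_sum_inter {α ι : Type} [DecidableEq α] [Fintype ι] [DecidableEq ι]
    (X : ι → Finset α) (hd : ∀ i j, i ≠ j → Disjoint (X i) (X j))
    (S : Finset α) (hS : S ⊆ univ.biUnion X) :
    S.card = ∑ i, (S ∩ X i).card := by
  have hrepr : S = univ.biUnion (fun i => S ∩ X i) := by
    ext x
    simp only [Finset.mem_biUnion, Finset.mem_inter, Finset.mem_univ, true_and]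
    constructor
    · intro hx
      have := hS hx
      simp only [Finset.mem_biUnion, Finset.mem_univ, true_and] at this
      obtain ⟨i, hi⟩ := this
      exact ⟨i, hx, hi⟩
    · rintro ⟨i, hx, -⟩; exact hx
  conv_lhs => rw [hrepr]
  exact Finset.card_biUnion (fun i _ j _ hij =>
    (hd i j hij).mono Finset.inter_subset_right Finset.inter_subset_right)

lemma count_fixed_inter {α ι : Type} [DecidableEq α] [DecidableEq ι]
    (s : Finset ι) (B : ι → Finset α) (k : ι → ℕ)
    (hd : ∀ i ∈ s, ∀ j ∈ s, i ≠ j → Disjoint (B i) (B j)) :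
    ((s.biUnion B).powerset.filter (fun S => ∀ i ∈ s, (S ∩ B i).card = k i)).card
      = ∏ i ∈ s, (B i).card.choose (k i) := by
  induction s using Finset.induction with
  | empty => simp
  | @insert a s ha ih =>
    have hdBa : Disjoint (B a) (s.biUnion B) := by
      rw [Finset.disjoint_biUnion_right]
      intro j hj
      exact hd a (mem_insert_self a s) j (mem_insert_of_mem hj) (fun h => ha (h ▸ hj))
    rw [Finset.prod_insert ha, ← ih (fun i hi j hj hij =>
      hd i (mem_insert_of_mem hi) j (mem_insert_of_mem hj) hij),
      ← Finset.card_powersetCard]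
    rw [← Finset.card_product]
    apply Finset.card_nbij' (i := fun S => (S ∩ B a, S \ B a)) (j := fun p => p.1 ∪ p.2)
    · intro S hS
      simp only [Finset.mem_coe, Finset.mem_filter, Finset.mem_powerset] at hS
      obtain ⟨hSsub, hSk⟩ := hS
      simp only [Finset.mem_coe, Finset.mem_product, Finset.mem_powersetCard, Finset.mem_filter,
        Finset.mem_powerset]
      refine ⟨⟨Finset.inter_subset_right, hSk a (mem_insert_self a s)⟩, ?_, ?_⟩
      · intro x hx
        simp only [Finset.mem_sdiff] at hx
        have := hSsub hx.1
        simp only [Finset.biUnion_insert, Finset.mem_union] at this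
        tauto
      · intro i hi
        have : (S \ B a) ∩ B i = S ∩ B i := by
          ext x
          simp only [Finset.mem_inter, Finset.mem_sdiff]
          constructor
          · tauto
          · rintro ⟨hxS, hxB⟩
            refine ⟨⟨hxS, fun hxa => ?_⟩, hxB⟩
            exact Finset.disjoint_left.mp (hd a (mem_insert_self a s) i
              (mem_insert_of_mem hi) (fun h => ha (h ▸ hi))) hxa hxB
        rw [this]
        exact hSk i (mem_insert_of_mem hi)
    · rintro ⟨A, C⟩ hp
      simp only [Finset.mem_coe, Finset.mem_product, Finset.mem_powersetCard, Finset.mem_filter,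
        Finset.mem_powerset] at hp
      obtain ⟨⟨hA, hAk⟩, hC, hCk⟩ := hp
      simp only [Finset.mem_coe, Finset.mem_filter, Finset.mem_powerset, Finset.biUnion_insert]
      have hCa : Disjoint C (B a) := (hdBa.mono_right hC).symm
      refine ⟨Finset.union_subset (hA.trans Finset.subset_union_left)
        (hC.trans Finset.subset_union_right), ?_⟩
      intro i hi
      rcases Finset.mem_insert.mp hi with rfl | hi'
      · have : (A ∪ C) ∩ B i = A := by
          rw [Finset.union_inter_distrib_right, (Finset.inter_eq_left).mpr hA,
            (Finset.disjoint_iff_inter_eq_empty.mp hCa), Finset.union_empty]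
        rw [this]; exact hAk
      · have hABi : Disjoint A (B i) :=
          (hd a (mem_insert_self a s) i (mem_insert_of_mem hi')
            (fun h => ha (h ▸ hi'))).mono_left hA
        have : (A ∪ C) ∩ B i = C ∩ B i := by
          rw [Finset.union_inter_distrib_right,
            Finset.disjoint_iff_inter_eq_empty.mp hABi, Finset.empty_union]
        rw [this]; exact hCk i hi'
    · intro S hS
      simp only
      exact sup_inf_sdiff S (B a)
    · rintro ⟨A, C⟩ hp
      simp only [Finset.mem_coe, Finset.mem_product, Finset.mem_powersetCard, Finset.mem_filter,
        Finset.mem_powerset] at hp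
      obtain ⟨⟨hA, hAk⟩, hC, hCk⟩ := hp
      have hCa : Disjoint C (B a) := (hdBa.mono_right hC).symm
      have h1 : (A ∪ C) ∩ B a = A := by
        rw [Finset.union_inter_distrib_right, (Finset.inter_eq_left).mpr hA,
          (Finset.disjoint_iff_inter_eq_empty.mp hCa), Finset.union_empty]
      have h2 : (A ∪ C) \ B a = C := by
        rw [Finset.union_sdiff_distrib, Finset.sdiff_eq_empty_iff_subset.mpr hA,
          Finset.empty_union, (Finset.sdiff_eq_self_iff_disjoint).mpr hCa]
      simp [h1, h2]

/-- With main blocks `X 0, …, X (n-1)` of sizes `q 0, …, q (n-1)` (each nonempty) and an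
additional block `Y` of size 1, the number of `(n+1)`-element subsets meeting every main
block equals `q 0 ⋯ q (n-1) * (q 0 + ⋯ + q (n-1) - n + 2) / 2`. -/
theorem insets_n_plus_one {α : Type} [DecidableEq α] (n : ℕ)
    (X : Fin n → Finset α) (Y : Finset α) (q : Fin n → ℕ)
    (hdisj : ∀ i j : Fin n, i ≠ j → Disjoint (X i) (X j))
    (hY : ∀ i : Fin n, Disjoint (X i) Y)
    (hq : ∀ i, (X i).card = q i) (hqpos : ∀ i, 1 ≤ q i) (hm : Y.card = 1) :
    (((Finset.univ.biUnion X ∪ Y).powersetCard (n + 1)).filter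
        (fun S => ∀ i : Fin n, (S ∩ X i).Nonempty)).card
      = (∏ i, q i) * ((∑ i, q i) - n + 2) / 2 := by
  classical
  obtain ⟨y, rfl⟩ := Finset.card_eq_one.mp hm
  set U := Finset.univ.biUnion X with hU
  have hyX : ∀ i, y ∉ X i := fun i hyi =>
    Finset.disjoint_left.mp (hY i) hyi (Finset.mem_singleton_self y)
  have hyU : y ∉ U := by
    simp only [hU, Finset.mem_biUnion, Finset.mem_univ, true_and]
    rintro ⟨i, hi⟩; exact hyX i hi
  set F := ((U ∪ {y}).powersetCard (n + 1)).filter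
      (fun S => ∀ i : Fin n, (S ∩ X i).Nonempty) with hF
  have hdS : ∀ S : Finset α, S ⊆ U → S.card = ∑ i, (S ∩ X i).card :=
    fun S hS => card_eq_sum_inter X hdisj S hS
  -- counting F1 : sets containing y
  have hF1 : (F.filter (fun S => y ∈ S)).card = ∏ i, q i := by
    have hcount := count_fixed_inter (Finset.univ : Finset (Fin n)) X (fun _ => 1)
      (fun i _ j _ hij => hdisj i j hij)
    simp only [Nat.choose_one_right, hq] at hcount
    rw [← hcount]
    apply Finset.card_nbij' (i := fun S => S.erase y) (j := fun T => insert y T)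
    · intro S hS
      simp only [Finset.mem_coe, hF, Finset.mem_filter, Finset.mem_powersetCard] at hS
      obtain ⟨⟨⟨hSsub, hScard⟩, hSne⟩, hyS⟩ := hS
      have hesub : S.erase y ⊆ U := by
        intro x hx
        rw [Finset.mem_erase] at hx
        have := hSsub hx.2
        rw [Finset.mem_union, Finset.mem_singleton] at this
        tauto
      have hint : ∀ i, S.erase y ∩ X i = S ∩ X i := by
        intro i; ext x
        simp only [Finset.mem_inter, Finset.mem_erase]
        constructor
        · tauto
        · rintro ⟨h1, h2⟩; exact ⟨⟨fun h => hyX i (h ▸ h2), h1⟩, h2⟩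
      have hecard : (S.erase y).card = n := by
        rw [Finset.card_erase_of_mem hyS, hScard]; omega
      have hsum : ∑ i, (S.erase y ∩ X i).card = n := by
        rw [← hdS _ hesub, hecard]
      have hall := all_one Finset.univ (fun i => (S.erase y ∩ X i).card)
        (fun i _ => by
          simpa [hint i] using Finset.card_pos.mpr (hSne i))
        (by simpa using hsum)
      simp only [Finset.mem_coe, Finset.mem_filter, Finset.mem_powerset]
      exact ⟨hesub, fun i _ => hall i (Finset.mem_univ i)⟩
    · intro T hT
      simp only [Finset.mem_coe, Finset.mem_filter, Finset.mem_powerset] at hT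
      obtain ⟨hTsub, hTk⟩ := hT
      have hyT : y ∉ T := fun h => hyU (hTsub h)
      have hint : ∀ i, insert y T ∩ X i = T ∩ X i := by
        intro i; ext x
        simp only [Finset.mem_inter, Finset.mem_insert]
        constructor
        · rintro ⟨(rfl | h1), h2⟩
          · exact absurd h2 (hyX i)
          · exact ⟨h1, h2⟩
        · tauto
      simp only [Finset.mem_coe, hF, Finset.mem_filter, Finset.mem_powersetCard]
      refine ⟨⟨⟨?_, ?_⟩, ?_⟩, Finset.mem_insert_self y T⟩
      · intro x hx
        rcases Finset.mem_insert.mp hx with rfl | h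
        · exact Finset.mem_union_right _ (Finset.mem_singleton_self x)
        · exact Finset.mem_union_left _ (hTsub h)
      · rw [Finset.card_insert_of_notMem hyT]
        have : T.card = n := by
          rw [hdS T hTsub]
          simp [hTk _ (Finset.mem_univ _)]
        omega
      · intro i
        rw [hint i]
        exact Finset.card_pos.mp (by rw [hTk i (Finset.mem_univ i)]; norm_num)
    · intro S hS
      simp only [Finset.mem_coe, Finset.mem_filter] at hS
      exact Finset.insert_erase hS.2
    · intro T hT
      simp only [Finset.mem_coe, Finset.mem_filter, Finset.mem_powerset] at hT
      exact Finset.erase_insert (fun h => hyU (hT.1 h))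
  -- counting F0 : sets not containing y
  have hF0 : (F.filter (fun S => ¬ y ∈ S)).card
      = ∑ j, (q j).choose 2 * ∏ i ∈ Finset.univ.erase j, q i := by
    have hGdef : ∀ j : Fin n,
        (U.powerset.filter (fun S => ∀ i ∈ Finset.univ, (S ∩ X i).card
          = (if i = j then 2 else 1))).card
        = (q j).choose 2 * ∏ i ∈ Finset.univ.erase j, q i := by
      intro j
      have h := count_fixed_inter Finset.univ X (fun i => if i = j then 2 else 1)
        (fun i _ j' _ hij => hdisj i j' hij)
      rw [Finset.filter_congr_decidable] at h
      rw [hU, h]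
      rw [← Finset.mul_prod_erase Finset.univ _ (Finset.mem_univ j)]
      simp only [if_pos rfl, hq]
      congr 1
      apply Finset.prod_congr rfl
      intro i hi
      simp [if_neg (Finset.mem_erase.mp hi).1, Nat.choose_one_right, hq]
    have hpart : F.filter (fun S => ¬ y ∈ S)
        = Finset.univ.biUnion (fun j : Fin n =>
            U.powerset.filter (fun S => ∀ i ∈ Finset.univ, (S ∩ X i).card
              = (if i = j then 2 else 1))) := by
      ext S
      simp only [hF, Finset.mem_filter, Finset.mem_powersetCard, Finset.mem_biUnion,
        Finset.mem_univ, true_and, Finset.mem_powerset]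
      constructor
      · rintro ⟨⟨⟨hSsub, hScard⟩, hSne⟩, hyS⟩
        have hsubU : S ⊆ U := by
          intro x hx
          have := hSsub hx
          rw [Finset.mem_union, Finset.mem_singleton] at this
          rcases this with h | rfl
          · exact h
          · exact absurd hx hyS
        have hsum : ∑ i, (S ∩ X i).card = n + 1 := by rw [← hdS S hsubU, hScard]
        obtain ⟨j, -, hj2, hjo⟩ := exists_two Finset.univ (fun i => (S ∩ X i).card)
          (fun i _ => Finset.card_pos.mpr (hSne i)) (by simpa using hsum)
        refine ⟨j, hsubU, fun i _ => ?_⟩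
        by_cases h : i = j
        · subst h; simpa using hj2
        · rw [if_neg h]; exact hjo i (Finset.mem_univ i) h
      · rintro ⟨j, hsubU, hk⟩
        have hyS : y ∉ S := fun h => hyU (hsubU h)
        have hScard : S.card = n + 1 := by
          rw [hdS S hsubU]
          have h1 : ∑ i, (S ∩ X i).card = ∑ i : Fin n, (if i = j then 2 else 1) :=
            Finset.sum_congr rfl (fun i _ => hk i trivial)
          have h2 : ∀ i : Fin n, (if i = j then 2 else 1) = 1 + (if i = j then 1 else 0) := by
            intro i; split <;> rfl
          rw [h1, Finset.sum_congr rfl (fun i _ => h2 i), Finset.sum_add_distrib,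
            Finset.sum_ite_eq' Finset.univ j (fun _ => 1)]
          simp
        refine ⟨⟨⟨hsubU.trans Finset.subset_union_left, hScard⟩, ?_⟩, hyS⟩
        intro i
        apply Finset.card_pos.mp
        rw [hk i trivial]
        split <;> norm_num
    rw [hpart, Finset.card_biUnion]
    · exact Finset.sum_congr rfl (fun j _ => hGdef j)
    · intro j _ j' _ hjj'
      rw [Function.onFun, Finset.disjoint_left]
      intro S hS hS'
      simp only [Finset.mem_filter] at hS hS'
      have h1 := hS.2 j (Finset.mem_univ j)
      have h2 := hS'.2 j (Finset.mem_univ j)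
      rw [if_pos rfl] at h1
      rw [if_neg hjj'] at h2
      omega
  -- combine
  have hsplit := Finset.card_filter_add_card_filter_not
    (s := F) (p := fun S => y ∈ S)
  -- arithmetic
  have hsum_sub : (∑ i, q i) - n + 2 = (∑ i, (q i - 1)) + 2 := by
    have : ∑ i, q i = (∑ i, (q i - 1)) + n := by
      have h : ∀ i : Fin n, q i = (q i - 1) + 1 :=
        fun i => (Nat.succ_pred_eq_of_pos (hqpos i)).symm
      rw [Finset.sum_congr rfl (fun i _ => h i), Finset.sum_add_distrib]
      simp
    omega
  have harith : (∏ i, q i) * ((∑ i, q i) - n + 2)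
      = 2 * ((∏ i, q i) + ∑ j, (q j).choose 2 * ∏ i ∈ Finset.univ.erase j, q i) := by
    rw [hsum_sub, Nat.mul_add, Finset.mul_sum]
    have hterm : ∀ j : Fin n, (∏ i, q i) * (q j - 1)
        = 2 * ((q j).choose 2 * ∏ i ∈ Finset.univ.erase j, q i) := by
      intro j
      rw [← Finset.mul_prod_erase Finset.univ q (Finset.mem_univ j)]
      rw [mul_right_comm, ← two_mul_choose_two (q j)]
      ring
    rw [Finset.sum_congr rfl (fun j _ => hterm j), ← Finset.mul_sum]
    ring
  rw [harith, Nat.mul_div_cancel_left _ (by norm_num)]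
  omega
end

section
/- For all nonnegative integers m, k and positive integer q: Σ_{i=0}^{n} (-1)^i C(n,i) C(nq + m − iq, n+k) with q = 1 reduces to the identity C(m,k) = Σ_{i=0}^{n} (-1)^i C(n,i) C(n + m − i, n + k). -/
/-- The binomial identity `C(m,k) = ∑_{i=0}^{n} (-1)^i C(n,i) C(n+m-i, n+k)`. -/
theorem binomial_alternating_identity (m n k : ℕ) :
    (m.choose k : ℤ)
      = ∑ i ∈ Finset.range (n + 1),
          (-1 : ℤ) ^ i * n.choose i * (n + m - i).choose (n + k) := by
  induction n generalizing m k with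
  | zero => simp
  | succ n ih =>
    have hA := ih (m + 1) (k + 1)
    have hB := ih m (k + 1)
    rw [Finset.sum_range_succ']
    have step : ∀ i ∈ Finset.range (n + 1),
        ((-1 : ℤ) ^ (i + 1) * ((n + 1).choose (i + 1)) *
            (((n + 1) + m - (i + 1)).choose ((n + 1) + k)))
          = -((-1 : ℤ) ^ i * n.choose i * ((n + m - i).choose (n + (k + 1))))
            + (-1 : ℤ) ^ (i + 1) * (n.choose (i + 1)) *
                ((n + (m + 1) - (i + 1)).choose (n + (k + 1))) := by
      intro i _
      have e1 : (n + 1) + m - (i + 1) = n + m - i := by omega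
      have e2 : n + (m + 1) - (i + 1) = n + m - i := by omega
      have e3 : (n + 1) + k = n + (k + 1) := by omega
      rw [e1, e2, e3, Nat.choose_succ_succ']
      push_cast
      ring
    rw [Finset.sum_congr rfl step, Finset.sum_add_distrib]
    have h0 : ((-1 : ℤ) ^ 0 * ((n + 1).choose 0) *
          (((n + 1) + m - 0).choose ((n + 1) + k)))
        = (-1 : ℤ) ^ 0 * (n.choose 0) * ((n + (m + 1) - 0).choose (n + (k + 1))) := by
      have e4 : (n + 1) + m - 0 = n + (m + 1) - 0 := by omega
      have e5 : (n + 1) + k = n + (k + 1) := by omega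
      rw [e4, e5]
      simp
    rw [h0]
    have hS1 : (∑ i ∈ Finset.range (n + 1),
          (-1 : ℤ) ^ (i + 1) * (n.choose (i + 1)) *
            ((n + (m + 1) - (i + 1)).choose (n + (k + 1))))
        + (-1 : ℤ) ^ 0 * (n.choose 0) * ((n + (m + 1) - 0).choose (n + (k + 1)))
        = ∑ i ∈ Finset.range (n + 2),
            (-1 : ℤ) ^ i * (n.choose i) * ((n + (m + 1) - i).choose (n + (k + 1))) :=
      (Finset.sum_range_succ'
        (fun i => (-1 : ℤ) ^ i * (n.choose i) * ((n + (m + 1) - i).choose (n + (k + 1))))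
        (n + 1)).symm
    have hS2 : (∑ i ∈ Finset.range (n + 2),
          (-1 : ℤ) ^ i * (n.choose i) * ((n + (m + 1) - i).choose (n + (k + 1))))
        = ∑ i ∈ Finset.range (n + 1),
            (-1 : ℤ) ^ i * (n.choose i) * ((n + (m + 1) - i).choose (n + (k + 1))) := by
      rw [Finset.sum_range_succ]
      simp [Nat.choose_succ_self]
    have hsum : ∑ i ∈ Finset.range (n + 1),
        (-((-1 : ℤ) ^ i * n.choose i * ((n + m - i).choose (n + (k + 1)))))
        = -∑ i ∈ Finset.range (n + 1),
            (-1 : ℤ) ^ i * n.choose i * ((n + m - i).choose (n + (k + 1))) := by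
      rw [Finset.sum_neg_distrib]
    rw [hsum, add_assoc, hS1, hS2, ← hA, ← hB]
    have := Nat.choose_succ_succ m k
    push_cast [this]
    ring
end

section
/- For all positive integers q, n and all nonnegative integers m: q^n = Σ_{i=0}^{n} (-1)^i C(n,i) C(qn + m − qi, n). -/
open Finset Nat Function fwdDiff

private lemma pai_delta (q m j : ℕ) :
    Δ_[1] (fun x : ℕ => ((q * x + m).choose (j + 1) : ℤ))
      = ∑ a ∈ Finset.range (j + 1),
          (q.choose (a + 1) : ℤ) • (fun x : ℕ => ((q * x + m).choose (j - a) : ℤ)) := by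
  ext x
  have h1 : q * (x + 1) + m = q + (q * x + m) := by ring
  have h2 : (q * (x + 1) + m).choose (j + 1)
      = ∑ a ∈ Finset.range (j + 2), q.choose a * (q * x + m).choose (j + 1 - a) := by
    rw [h1, Nat.add_choose_eq, Finset.Nat.sum_antidiagonal_eq_sum_range_succ_mk]
  simp only [fwdDiff, h2, Finset.sum_range_succ', Nat.choose_zero_right, one_mul,
    Nat.sub_zero, Finset.sum_apply, Pi.smul_apply, smul_eq_mul, Nat.succ_sub_succ_eq_sub]
  push_cast
  ring

private lemma pai_zero (q m : ℕ) (k : ℕ) :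
    ∀ j < k, (Δ_[1])^[k] (fun x : ℕ => ((q * x + m).choose j : ℤ)) = 0 := by
  induction k with
  | zero => intro j hj; omega
  | succ k IH =>
    intro j hj
    rw [Function.iterate_succ_apply]
    cases j with
    | zero =>
      have : (fun x : ℕ => ((q * x + m).choose 0 : ℤ)) = fun _ => (1 : ℤ) := by
        funext x; simp
      rw [this, fwdDiff_const]
      have h0 : (fun _ : ℕ => (0 : ℤ)) = ((0 : ℤ) • fun _ : ℕ => (0 : ℤ)) := by
        funext x; simp
      rw [h0, fwdDiff_iter_const_smul]; funext x; simp
    | succ j =>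
      rw [pai_delta, fwdDiff_iter_finset_sum]
      apply Finset.sum_eq_zero
      intro a _
      rw [fwdDiff_iter_const_smul, IH (j - a) (by omega)]
      simp

private lemma pai_main (q m : ℕ) (n : ℕ) :
    (Δ_[1])^[n] (fun x : ℕ => ((q * x + m).choose n : ℤ)) = fun _ => (q : ℤ) ^ n := by
  induction n with
  | zero => funext x; simp
  | succ n IH =>
    rw [Function.iterate_succ_apply, pai_delta, fwdDiff_iter_finset_sum]
    rw [Finset.sum_range_succ']
    have hz : ∀ a ∈ Finset.range n,
        (Δ_[1])^[n] ((q.choose (a + 1 + 1) : ℤ) •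
          (fun x : ℕ => ((q * x + m).choose (n - (a + 1)) : ℤ))) = 0 := by
      intro a ha
      rw [fwdDiff_iter_const_smul, pai_zero q m n (n - (a + 1))
        (by simp at ha; omega)]
      simp
    rw [Finset.sum_congr rfl hz, Finset.sum_const_zero, zero_add,
      fwdDiff_iter_const_smul, Nat.sub_zero, IH]
    funext x
    simp [pow_succ, mul_comm]

/-- For positive integers `q, n` and nonnegative `m`:
`q^n = ∑_{i=0}^{n} (-1)^i C(n,i) C(qn + m - qi, n)`. -/
theorem power_alternating_identity (q n m : ℕ) (hq : 1 ≤ q) (hn : 1 ≤ n) :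
    ((q : ℤ)) ^ n
      = ∑ i ∈ Finset.range (n + 1),
          (-1 : ℤ) ^ i * n.choose i * (q * n + m - q * i).choose n := by
  have key := fwdDiff_iter_eq_sum_shift (1 : ℕ)
    (fun x : ℕ => ((q * x + m).choose n : ℤ)) n 0
  rw [pai_main q m n] at key
  beta_reduce at key
  rw [key]
  rw [← Finset.sum_range_reflect]
  apply Finset.sum_congr rfl
  intro i hi
  simp only [Finset.mem_range] at hi
  have hi' : i ≤ n := by omega
  have h1 : n + 1 - 1 - i = n - i := by omega
  have h2 : n - (n - i) = i := by omega
  have hmul : q * n = q * (n - i) + q * i := by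
    rw [← Nat.mul_add]; congr 1; omega
  have h3' : q * (n - i) + m = q * n + m - q * i := by omega
  rw [h1]
  simp only [h2, smul_eq_mul, zero_add, mul_one]
  rw [Nat.choose_symm hi', h3']
end

section
/- For all nonnegative integers m, n, k: the number of (n+k)-insets of a set with n main blocks each of size 2 and additional block of size m equals 2^{n-k} Σ_{i=0}^{m} 2^i C(m,i) C(n, k−i). -/
/-- `insetCount n m k q` is the number of `(n+k)`-insets: subsets of cardinality `n + k` of
the disjoint union of main blocks of sizes `q 0, …, q (n-1)` and an additional block of
size `m`, meeting every main block.  (For negative `k` the count is `0`.) -/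
def insetCount (n m : ℕ) (k : ℤ) (q : Fin n → ℕ) : ℕ :=
  (Finset.univ.filter
    (fun S : Finset ((Σ i : Fin n, Fin (q i)) ⊕ Fin m) =>
      (S.card : ℤ) = n + k ∧ ∀ i : Fin n, ∃ x : Fin (q i), Sum.inl ⟨i, x⟩ ∈ S)).card


open Finset

def G (n t : ℕ) : ℕ :=
  (Finset.univ.filter (fun f : Fin n → Finset (Fin 2) =>
    (∀ i, (f i).Nonempty) ∧ ∑ i, (f i).card = t)).card

lemma shift_sum (n t c : ℕ) :
    (∑ f : Fin n → Finset (Fin 2),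
      if ((∀ i, (f i).Nonempty) ∧ c + ∑ i, (f i).card = t) then 1 else 0)
    = if c ≤ t then G n (t - c) else 0 := by
  rcases le_or_gt c t with h | h
  · rw [if_pos h, G, Finset.card_filter]
    apply Finset.sum_congr rfl
    intro f _
    refine if_congr ?_ rfl rfl
    constructor
    · rintro ⟨h1, h2⟩; exact ⟨h1, by omega⟩
    · rintro ⟨h1, h2⟩; exact ⟨h1, by omega⟩
  · rw [if_neg (by omega)]
    apply Finset.sum_eq_zero
    intro f _
    rw [if_neg]
    rintro ⟨h1, h2⟩; omega

lemma G_zero (t : ℕ) : G 0 t = if t = 0 then 1 else 0 := by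
  rcases t with _ | t
  · rw [if_pos rfl, G]
    rw [Finset.filter_true_of_mem (fun f _ => ⟨fun i => i.elim0, by simp⟩)]
    simp [Finset.card_univ]
  · rw [if_neg (by omega), G]
    rw [Finset.filter_false_of_mem (fun f _ => by simp)]
    simp

lemma G_succ (n t : ℕ) :
    G (n+1) t = 2 * (if 1 ≤ t then G n (t - 1) else 0) + (if 2 ≤ t then G n (t - 2) else 0) := by
  rw [G, Finset.card_filter]
  rw [← Equiv.sum_comp (Fin.consEquiv (fun _ : Fin (n+1) => Finset (Fin 2)))]
  rw [Fintype.sum_prod_type]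
  have key : ∀ (x : Finset (Fin 2)) (f : Fin n → Finset (Fin 2)),
      ((∀ i, (Fin.cons (α := fun _ => Finset (Fin 2)) x f i).Nonempty) ∧ ∑ i, (Fin.cons (α := fun _ => Finset (Fin 2)) x f i).card = t)
      ↔ ((x.Nonempty ∧ ∀ i, (f i).Nonempty) ∧ x.card + ∑ i, (f i).card = t) := by
    intro x f
    rw [Fin.forall_fin_succ, Fin.sum_univ_succ]
    simp [and_assoc]
  have step : ∀ x : Finset (Fin 2),
      (∑ f : Fin n → Finset (Fin 2),
        if ((∀ i, ((Fin.consEquiv (fun _ : Fin (n+1) => Finset (Fin 2))) (x, f) i).Nonempty) ∧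
            ∑ i, ((Fin.consEquiv (fun _ : Fin (n+1) => Finset (Fin 2))) (x, f) i).card = t) then 1 else 0)
      = if x.Nonempty then (if x.card ≤ t then G n (t - x.card) else 0) else 0 := by
    intro x
    have hc : ∀ f : Fin n → Finset (Fin 2),
        (Fin.consEquiv (fun _ : Fin (n+1) => Finset (Fin 2))) (x, f) = Fin.cons x f := fun f => rfl
    rcases (Finset.eq_empty_or_nonempty x) with hx | hx
    · subst hx
      rw [if_neg (by simp)]
      apply Finset.sum_eq_zero
      intro f _
      rw [if_neg]
      rw [hc, key]; rintro ⟨⟨h,_⟩,_⟩; simp at h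
    · rw [if_pos hx, ← shift_sum]
      apply Finset.sum_congr rfl
      intro f _
      refine if_congr ?_ rfl rfl
      rw [hc, key]
      constructor
      · rintro ⟨⟨_,h1⟩, h2⟩; exact ⟨h1, h2⟩
      · rintro ⟨h1, h2⟩; exact ⟨⟨hx, h1⟩, h2⟩
  rw [Finset.sum_congr rfl (fun x _ => step x)]
  rw [show (univ : Finset (Finset (Fin 2))) = {∅, {0}, {1}, {0,1}} by decide]
  rw [Finset.sum_insert (by decide), Finset.sum_insert (by decide),
      Finset.sum_insert (by decide), Finset.sum_singleton]
  have c1 : ({0} : Finset (Fin 2)).card = 1 := rfl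
  have c2 : ({1} : Finset (Fin 2)).card = 1 := rfl
  have c3 : ({0,1} : Finset (Fin 2)).card = 2 := rfl
  simp only [Finset.not_nonempty_empty, if_false, Finset.singleton_nonempty,
    Finset.insert_nonempty, if_true, c1, c2, c3]
  ring

lemma arith (n j : ℕ) :
    (n+1).choose j * 2^(n+1-j)
      = 2 * (n.choose j * 2^(n-j)) + (if 1 ≤ j then n.choose (j-1) * 2^(n-(j-1)) else 0) := by
  rcases j with _ | i
  · simp [pow_succ]; ring
  · rw [if_pos (by omega), Nat.choose_succ_succ]
    have e1 : i + 1 - 1 = i := by omega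
    rw [e1]
    rcases le_or_gt (i+1) n with h | h
    · have e2 : n - (i+1) + 1 = n - i := by omega
      have e3 : n + 1 - (i + 1) = n - i := by omega
      rw [e3, ← e2, pow_succ]
      ring
    · rw [Nat.choose_eq_zero_of_lt h]
      rcases le_or_gt (i+1) (n+1) with h5 | h5
      · have : i = n := by omega
        subst this
        simp [Nat.choose_self]
      · simp [Nat.choose_eq_zero_of_lt (by omega : n < i), Nat.choose_eq_zero_of_lt (by omega : n + 1 < i + 1)]

lemma G_eq (n : ℕ) : ∀ t, G n t = if n ≤ t then n.choose (t - n) * 2 ^ (2*n - t) else 0 := by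
  induction n with
  | zero =>
      intro t
      rw [G_zero]
      rcases t with _ | t
      · simp
      · rw [if_neg (by omega), if_pos (by omega)]
        simp [Nat.choose_eq_zero_of_lt]
  | succ n ih =>
      intro t
      rw [G_succ, ih, ih]
      rcases lt_or_ge t (n+1) with h | h
      · rw [if_neg (show ¬(n+1 ≤ t) by omega)]
        split_ifs <;> omega
      · obtain ⟨j, rfl⟩ : ∃ j, t = n + 1 + j := ⟨t - (n+1), by omega⟩
        rw [if_pos (by omega : (1:ℕ) ≤ n + 1 + j), if_pos (by omega : n + 1 ≤ n + 1 + j)]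
        have e1 : n + 1 + j - (n + 1) = j := by omega
        have e2 : n + 1 + j - 1 - n = j := by omega
        have e3 : 2 * n - (n + 1 + j - 1) = n - j := by omega
        have e4 : 2 * (n + 1) - (n + 1 + j) = n + 1 - j := by omega
        rw [e1, e2, e3, e4, if_pos (by omega : n ≤ n + 1 + j - 1)]
        rcases le_or_gt 2 (n + 1 + j) with h2 | h2
        · rw [if_pos h2]
          have e5 : n + 1 + j - 2 = n + j - 1 := by omega
          rw [e5]
          rcases Nat.eq_zero_or_pos j with hj | hj
          · subst hj
            rw [if_neg (by omega)]
            rw [arith]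
            simp
          · rw [if_pos (by omega)]
            have e6 : n + j - 1 - n = j - 1 := by omega
            have e7 : 2 * n - (n + j - 1) = n - (j - 1) := by omega
            rw [e6, e7, arith, if_pos (by omega : 1 ≤ j)]
        · -- n + 1 + j ≤ 1, so n = 0, j = 0
          have hn : n = 0 := by omega
          have hj : j = 0 := by omega
          subst hn; subst hj
          rw [if_neg (by omega)]
          simp [arith]

lemma sum_card_decomp (n m : ℕ) (S : Finset ((Σ _ : Fin n, Fin 2) ⊕ Fin m)) :
    S.card = (∑ j, (univ.filter fun x : Fin 2 => Sum.inl ⟨j,x⟩ ∈ S).card)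
             + (univ.filter fun b : Fin m => Sum.inr b ∈ S).card := by
  conv_lhs => rw [← Finset.filter_univ_mem S, Finset.card_filter]
  rw [Fintype.sum_sum_type]
  congr 1
  · rw [← Finset.univ_sigma_univ, Finset.sum_sigma]
    exact Finset.sum_congr rfl (fun j _ => (Finset.card_filter _ _).symm)
  · exact (Finset.card_filter _ _).symm

lemma insetCount_eq_target (n m k : ℕ) :
    insetCount n m (k : ℤ) (fun _ => 2)
      = (Finset.univ.filter
          (fun p : (Fin n → Finset (Fin 2)) × Finset (Fin m) =>
            (∀ i, (p.1 i).Nonempty) ∧ (∑ i, (p.1 i).card) + p.2.card = n + k)).card := by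
  rw [insetCount]
  refine Finset.card_bij'
    (fun S _ => (fun j => univ.filter fun x : Fin 2 => Sum.inl ⟨j,x⟩ ∈ S,
                 univ.filter fun b : Fin m => Sum.inr b ∈ S))
    (fun p _ => ((univ.sigma (fun j => p.1 j)).map ⟨Sum.inl, Sum.inl_injective⟩)
                ∪ (p.2.map ⟨Sum.inr, Sum.inr_injective⟩)) ?_ ?_ ?_ ?_
  · intro S hS
    rw [Finset.mem_filter] at hS
    obtain ⟨-, hcard, hmeet⟩ := hS
    rw [Finset.mem_filter]
    refine ⟨Finset.mem_univ _, ?_, ?_⟩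
    · intro i
      obtain ⟨x, hx⟩ := hmeet i
      exact ⟨x, by simp [hx]⟩
    · have : S.card = n + k := by exact_mod_cast hcard
      rw [← this]
      exact (sum_card_decomp n m S).symm
  · intro p hp
    rw [Finset.mem_filter] at hp
    obtain ⟨-, hne, hcard⟩ := hp
    rw [Finset.mem_filter]
    refine ⟨Finset.mem_univ _, ?_, ?_⟩
    · have : ((univ.sigma (fun j => p.1 j)).map ⟨Sum.inl, Sum.inl_injective⟩
                ∪ (p.2.map ⟨Sum.inr, Sum.inr_injective⟩)).card
          = (∑ i, (p.1 i).card) + p.2.card := by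
        rw [Finset.card_union_of_disjoint (by
          simp [Finset.disjoint_left])]
        rw [Finset.card_map, Finset.card_map, Finset.card_sigma]
      rw [this, hcard]
      push_cast
      ring
    · intro i
      obtain ⟨x, hx⟩ := hne i
      exact ⟨x, by simp [Finset.mem_sigma, hx]⟩
  · intro S _
    ext a
    rcases a with ⟨j, x⟩ | b <;> simp [Finset.mem_sigma]
  · intro p _
    refine Prod.ext ?_ ?_
    · funext j
      ext x
      simp [Finset.mem_sigma]
    · ext b
      simp

lemma shift_sum' (n t c : ℕ) :
    (∑ f : Fin n → Finset (Fin 2),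
      if ((∀ i, (f i).Nonempty) ∧ (∑ i, (f i).card) + c = t) then 1 else 0)
    = if c ≤ t then G n (t - c) else 0 := by
  rcases le_or_gt c t with h | h
  · rw [if_pos h, G, Finset.card_filter]
    apply Finset.sum_congr rfl
    intro f _
    refine if_congr ?_ rfl rfl
    constructor
    · rintro ⟨h1, h2⟩; exact ⟨h1, by omega⟩
    · rintro ⟨h1, h2⟩; exact ⟨h1, by omega⟩
  · rw [if_neg (by omega)]
    apply Finset.sum_eq_zero
    intro f _
    rw [if_neg]
    rintro ⟨h1, h2⟩; omega

lemma target_count (n m k : ℕ) :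
    ((Finset.univ.filter
        (fun p : (Fin n → Finset (Fin 2)) × Finset (Fin m) =>
          (∀ i, (p.1 i).Nonempty) ∧ (∑ i, (p.1 i).card) + p.2.card = n + k)).card)
      = ∑ i ∈ Finset.range (m + 1),
          m.choose i * (if i ≤ n + k then G n (n + k - i) else 0) := by
  rw [Finset.card_filter, Fintype.sum_prod_type_right]
  have step : ∀ B : Finset (Fin m),
      (∑ f : Fin n → Finset (Fin 2),
        if ((∀ i, (f i).Nonempty) ∧ (∑ i, (f i).card) + B.card = n + k) then 1 else 0)
      = if B.card ≤ n + k then G n (n + k - B.card) else 0 := fun B => shift_sum' n (n+k) B.card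
  rw [Finset.sum_congr rfl (fun B _ => step B)]
  rw [← Finset.powerset_univ, Finset.sum_powerset]
  rw [Finset.card_univ, Fintype.card_fin]
  apply Finset.sum_congr rfl
  intro i _
  have : ∀ B ∈ Finset.powersetCard i (univ : Finset (Fin m)),
      (if B.card ≤ n + k then G n (n + k - B.card) else 0)
        = (if i ≤ n + k then G n (n + k - i) else 0) := by
    intro B hB
    rw [(Finset.mem_powersetCard.mp hB).2]
  rw [Finset.sum_congr rfl this, Finset.sum_const, Finset.card_powersetCard,
    Finset.card_univ, Fintype.card_fin, smul_eq_mul]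


lemma inset_nat (n m k : ℕ) :
    insetCount n m (k : ℤ) (fun _ => 2)
      = ∑ i ∈ Finset.range (m+1),
          if i ≤ k then m.choose i * (n.choose (k-i) * 2^(n-(k-i))) else 0 := by
  rw [insetCount_eq_target, target_count]
  apply Finset.sum_congr rfl
  intro i _
  rcases le_or_gt i k with h | h
  · rw [if_pos h, if_pos (by omega : i ≤ n + k), G_eq, if_pos (by omega : n ≤ n + k - i)]
    have e1 : n + k - i - n = k - i := by omega
    have e2 : 2*n - (n+k-i) = n - (k-i) := by omega
    rw [e1, e2]
  · rw [if_neg (by omega : ¬ i ≤ k)]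
    rcases le_or_gt i (n+k) with h2 | h2
    · rw [if_pos h2, G_eq, if_neg (by omega : ¬ n ≤ n + k - i), mul_zero]
    · rw [if_neg (by omega : ¬ i ≤ n + k), mul_zero]

/-- The explicit formula for all blocks of size `2`:
`F(m,n,k) = 2^(n-k) ∑_{i=0}^{m} 2^i C(m,i) C(n, k-i)`, where `C(n, k-i) = 0` for `k-i < 0`. -/
theorem insetCount_blocks_two (n m k : ℕ) :
    (insetCount n m (k : ℤ) (fun _ => 2) : ℚ)
      = (2 : ℚ) ^ ((n : ℤ) - (k : ℤ)) *
          ∑ i ∈ Finset.range (m + 1),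
            if i ≤ k then ((2 ^ i * m.choose i * n.choose (k - i) : ℕ) : ℚ) else 0 := by
  rw [inset_nat, Finset.mul_sum, Nat.cast_sum]
  apply Finset.sum_congr rfl
  intro i _
  rcases le_or_gt i k with h | h
  · rw [if_pos h, if_pos h]
    rcases le_or_gt (k-i) n with h2 | h2
    · have key : (2:ℚ)^((n:ℤ)-(k:ℤ)) * 2^(i:ℕ) = 2^(n-(k-i)) := by
        rw [← zpow_natCast (2:ℚ) i, ← zpow_add₀ (two_ne_zero) ((n:ℤ)-(k:ℤ)) (i:ℤ),
          ← zpow_natCast (2:ℚ) (n-(k-i))]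
        congr 1
        omega
      push_cast
      rw [← key]
      ring
    · rw [Nat.choose_eq_zero_of_lt h2]
      push_cast
      ring
  · rw [if_neg (not_le.mpr h), if_neg (not_le.mpr h), mul_zero, Nat.cast_zero]
end

section
/- For m ≥ 0: the number of 4-insets of a set with main blocks of sizes 2 and 3 and an additional block of size m equals 3(m+1)^2 + 2. -/
open Finset

lemma ch4 (k : ℕ) : 24 * (k + 4).choose 4 = (k+1)*(k+2)*(k+3)*(k+4) := by
  have h := Nat.descFactorial_eq_factorial_mul_choose (k+4) 4
  simp [Nat.descFactorial_succ, Nat.factorial] at h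
  rw [← h]; ring

lemma arith_s13 (m a : ℕ)
    (h : a + (m+3).choose 4 + (m+2).choose 4 = (m+5).choose 4 + m.choose 4) :
    a = 3 * (m + 1) ^ 2 + 2 := by
  match m with
  | 0 => simp [Nat.choose] at h ⊢; omega
  | 1 => simp [Nat.choose] at h ⊢; omega
  | 2 => simp [Nat.choose] at h ⊢; omega
  | 3 => simp [Nat.choose] at h ⊢; omega
  | (n+4) =>
    have e0 := ch4 n
    have e2 := ch4 (n+2)
    have e3 := ch4 (n+3)
    have e5 := ch4 (n+5)
    have h24 : 24 * a = 24 * (3 * (n + 4 + 1) ^ 2 + 2) := by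
      have := congrArg (24 * ·) h
      simp only [Nat.mul_add] at this
      have hc3 : n + 4 + 3 = n + 3 + 4 := by ring
      have hc2 : n + 4 + 2 = n + 2 + 4 := by ring
      have hc5 : n + 4 + 5 = n + 5 + 4 := by ring
      rw [hc3, hc2, hc5, e3, e2, e5, e0] at this
      ring_nf at this ⊢
      linarith
    omega

/-- With main blocks of sizes 2 and 3 and an additional block of size `m`, the number of
4-element subsets meeting both main blocks equals `3(m+1)^2 + 2` (the number of points on
the surface of a square pyramid). -/
theorem insets_square_pyramid_surface {α : Type} [DecidableEq α] (m : ℕ)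
    (X₁ X₂ Y : Finset α)
    (h12 : Disjoint X₁ X₂) (h1Y : Disjoint X₁ Y) (h2Y : Disjoint X₂ Y)
    (hX₁ : X₁.card = 2) (hX₂ : X₂.card = 3) (hY : Y.card = m) :
    (((X₁ ∪ X₂ ∪ Y).powersetCard 4).filter
        (fun S => (S ∩ X₁).Nonempty ∧ (S ∩ X₂).Nonempty)).card
      = 3 * (m + 1) ^ 2 + 2 := by
  classical
  set U := X₁ ∪ X₂ ∪ Y with hU
  have hUcard : U.card = m + 5 := by
    rw [hU, card_union_of_disjoint, card_union_of_disjoint h12, hX₁, hX₂, hY]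
    · ring
    · exact disjoint_union_left.mpr ⟨h1Y, h2Y⟩
  -- the three "avoiding" filters
  have hA : (U.powersetCard 4).filter (fun S => ¬(S ∩ X₁).Nonempty)
      = (X₂ ∪ Y).powersetCard 4 := by
    ext S
    simp only [mem_filter, mem_powersetCard, not_nonempty_iff_eq_empty,
      ← disjoint_iff_inter_eq_empty]
    constructor
    · rintro ⟨⟨hS, hc⟩, hd⟩
      refine ⟨fun x hx => ?_, hc⟩
      have := hS hx
      rw [hU] at this
      simp only [mem_union] at this ⊢
      rcases this with (h | h) | h
      · exact absurd hx (disjoint_left.mp hd.symm h)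
      · exact Or.inl h
      · exact Or.inr h
    · rintro ⟨hS, hc⟩
      refine ⟨⟨hS.trans ?_, hc⟩, ?_⟩
      · rw [hU]; exact union_subset (subset_union_right.trans subset_union_left)
          subset_union_right
      · exact Disjoint.mono_left hS (disjoint_union_left.mpr ⟨h12.symm, h1Y.symm⟩)
  have hB : (U.powersetCard 4).filter (fun S => ¬(S ∩ X₂).Nonempty)
      = (X₁ ∪ Y).powersetCard 4 := by
    ext S
    simp only [mem_filter, mem_powersetCard, not_nonempty_iff_eq_empty,
      ← disjoint_iff_inter_eq_empty]
    constructor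
    · rintro ⟨⟨hS, hc⟩, hd⟩
      refine ⟨fun x hx => ?_, hc⟩
      have := hS hx
      rw [hU] at this
      simp only [mem_union] at this ⊢
      rcases this with (h | h) | h
      · exact Or.inl h
      · exact absurd hx (disjoint_left.mp hd.symm h)
      · exact Or.inr h
    · rintro ⟨hS, hc⟩
      refine ⟨⟨hS.trans ?_, hc⟩, ?_⟩
      · rw [hU]; exact union_subset (subset_union_left.trans subset_union_left)
          subset_union_right
      · exact Disjoint.mono_left hS (disjoint_union_left.mpr ⟨h12, h2Y.symm⟩)
  have hAB : (U.powersetCard 4).filter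
      (fun S => ¬(S ∩ X₁).Nonempty ∧ ¬(S ∩ X₂).Nonempty)
      = Y.powersetCard 4 := by
    ext S
    simp only [mem_filter, mem_powersetCard, not_nonempty_iff_eq_empty,
      ← disjoint_iff_inter_eq_empty]
    constructor
    · rintro ⟨⟨hS, hc⟩, hd1, hd2⟩
      refine ⟨fun x hx => ?_, hc⟩
      have := hS hx
      rw [hU] at this
      simp only [mem_union] at this
      rcases this with (h | h) | h
      · exact absurd hx (disjoint_left.mp hd1.symm h)
      · exact absurd hx (disjoint_left.mp hd2.symm h)
      · exact h
    · rintro ⟨hS, hc⟩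
      refine ⟨⟨hS.trans ?_, hc⟩, ?_, ?_⟩
      · rw [hU]; exact subset_union_right
      · exact Disjoint.mono_left hS h1Y.symm
      · exact Disjoint.mono_left hS h2Y.symm
  -- counting
  set a := ((U.powersetCard 4).filter
      (fun S => (S ∩ X₁).Nonempty ∧ (S ∩ X₂).Nonempty)).card with ha
  have htot := card_filter_add_card_filter_not
    (s := U.powersetCard 4) (p := fun S => (S ∩ X₁).Nonempty ∧ (S ∩ X₂).Nonempty)
  have hneg : (U.powersetCard 4).filter
      (fun S => ¬((S ∩ X₁).Nonempty ∧ (S ∩ X₂).Nonempty))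
      = (U.powersetCard 4).filter (fun S => ¬(S ∩ X₁).Nonempty ∨ ¬(S ∩ X₂).Nonempty) := by
    apply filter_congr; intro S _; constructor <;> intro h <;> tauto
  have hIE := card_union_add_card_inter
    ((U.powersetCard 4).filter (fun S => ¬(S ∩ X₁).Nonempty))
    ((U.powersetCard 4).filter (fun S => ¬(S ∩ X₂).Nonempty))
  rw [← filter_or, ← filter_and, hA, hB, hAB] at hIE
  rw [hneg, card_powersetCard, hUcard] at htot
  have hc2Y : (X₂ ∪ Y).card = m + 3 := by
    rw [card_union_of_disjoint h2Y, hX₂, hY]; ring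
  have hc1Y : (X₁ ∪ Y).card = m + 2 := by
    rw [card_union_of_disjoint h1Y, hX₁, hY]; ring
  rw [card_powersetCard, card_powersetCard, card_powersetCard, hc2Y, hc1Y, hY] at hIE
  apply arith_s13 m
  omega
end

section
/- For m ≥ 1 and q ≥ 1: the number of 4-insets of a set with main blocks of sizes 2 and q and an additional block of size m equals m^2 + (m+1)^2 + ... + (m+q−1)^2. -/
lemma sq_choose (n : ℕ) : (n+2).choose 3 = n^2 + n.choose 3 := by
  induction n with
  | zero => decide
  | succ k ih =>
    have h1 : (k+3).choose 3 = (k+2).choose 2 + (k+2).choose 3 := Nat.choose_succ_succ' _ _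
    have h2 : (k+1).choose 3 = k.choose 2 + k.choose 3 := Nat.choose_succ_succ' _ _
    have h3 : (k+2).choose 2 = (k+1) + (k+1).choose 2 := by
      rw [Nat.choose_succ_succ' (k+1) 1, Nat.choose_one_right]
    have h4 : (k+1).choose 2 = k + k.choose 2 := by
      rw [Nat.choose_succ_succ' k 1, Nat.choose_one_right]
    have e : k+1+2 = k+3 := by omega
    have hsq : (k+1)^2 = k^2 + 2*k + 1 := by ring
    rw [e]
    omega

lemma key_id (m q : ℕ) :
    (m+q+2).choose 4 + m.choose 4 =
      (∑ j ∈ Finset.range q, (m + j) ^ 2) + (m+q).choose 4 + (m+2).choose 4 := by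
  induction q with
  | zero => simp; ring
  | succ k ih =>
    rw [Finset.sum_range_succ]
    have h1 : (m+k+3).choose 4 = (m+k+2).choose 3 + (m+k+2).choose 4 := Nat.choose_succ_succ' _ _
    have h2 : (m+k+1).choose 4 = (m+k).choose 3 + (m+k).choose 4 := Nat.choose_succ_succ' _ _
    have h3 := sq_choose (m+k)
    have e1 : m + (k+1) + 2 = m + k + 3 := by ring
    have e2 : m + (k+1) = m + k + 1 := by ring
    rw [e1, e2]
    omega

/-- With main blocks of sizes 2 and `q` and an additional block of size `m`, the number of
4-element subsets meeting both main blocks equals `m² + (m+1)² + ⋯ + (m+q-1)²`. -/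
theorem insets_truncated_square_pyramidal {α : Type} [DecidableEq α] (m q : ℕ)
    (hm : 1 ≤ m) (hq : 1 ≤ q) (X₁ X₂ Y : Finset α)
    (h12 : Disjoint X₁ X₂) (h1Y : Disjoint X₁ Y) (h2Y : Disjoint X₂ Y)
    (hX₁ : X₁.card = 2) (hX₂ : X₂.card = q) (hY : Y.card = m) :
    (((X₁ ∪ X₂ ∪ Y).powersetCard 4).filter
        (fun S => (S ∩ X₁).Nonempty ∧ (S ∩ X₂).Nonempty)).card
      = ∑ j ∈ Finset.range q, (m + j) ^ 2 := by
  classical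
  set U := X₁ ∪ X₂ ∪ Y with hU
  set A := U.powersetCard 4 with hA
  -- complements
  have hP : A.filter (fun S => ¬ (S ∩ X₁).Nonempty) = (X₂ ∪ Y).powersetCard 4 := by
    ext S
    simp only [hA, Finset.mem_filter, Finset.mem_powersetCard, Finset.not_nonempty_iff_eq_empty,
      ← Finset.disjoint_iff_inter_eq_empty]
    constructor
    · rintro ⟨⟨hSU, hc⟩, hd⟩
      refine ⟨fun x hx => ?_, hc⟩
      have := hSU hx
      simp only [hU, Finset.mem_union] at this
      rcases this with (h | h) | h
      · exact absurd hx (Finset.disjoint_right.mp hd h)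
      · simp [h]
      · simp [h]
    · rintro ⟨hS, hc⟩
      refine ⟨⟨hS.trans ?_, hc⟩, ?_⟩
      · intro x hx; simp only [hU, Finset.mem_union]
        rcases Finset.mem_union.mp hx with h | h
        · exact Or.inl (Or.inr h)
        · exact Or.inr h
      · exact (Finset.disjoint_union_left.mpr ⟨h12.symm, h1Y.symm⟩).mono_left hS
  have hQ : A.filter (fun S => ¬ (S ∩ X₂).Nonempty) = (X₁ ∪ Y).powersetCard 4 := by
    ext S
    simp only [hA, Finset.mem_filter, Finset.mem_powersetCard, Finset.not_nonempty_iff_eq_empty,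
      ← Finset.disjoint_iff_inter_eq_empty]
    constructor
    · rintro ⟨⟨hSU, hc⟩, hd⟩
      refine ⟨fun x hx => ?_, hc⟩
      have := hSU hx
      simp only [hU, Finset.mem_union] at this
      rcases this with (h | h) | h
      · simp [h]
      · exact absurd hx (Finset.disjoint_right.mp hd h)
      · simp [h]
    · rintro ⟨hS, hc⟩
      refine ⟨⟨hS.trans ?_, hc⟩, ?_⟩
      · intro x hx; simp only [hU, Finset.mem_union]
        rcases Finset.mem_union.mp hx with h | h
        · exact Or.inl (Or.inl h)
        · exact Or.inr h
      · exact (Finset.disjoint_union_left.mpr ⟨h12, h2Y.symm⟩).mono_left hS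
  have hPQ : A.filter (fun S => ¬ (S ∩ X₁).Nonempty ∧ ¬ (S ∩ X₂).Nonempty)
      = Y.powersetCard 4 := by
    ext S
    simp only [hA, Finset.mem_filter, Finset.mem_powersetCard, Finset.not_nonempty_iff_eq_empty,
      ← Finset.disjoint_iff_inter_eq_empty]
    constructor
    · rintro ⟨⟨hSU, hc⟩, hd1, hd2⟩
      refine ⟨fun x hx => ?_, hc⟩
      have := hSU hx
      simp only [hU, Finset.mem_union] at this
      rcases this with (h | h) | h
      · exact absurd hx (Finset.disjoint_right.mp hd1 h)
      · exact absurd hx (Finset.disjoint_right.mp hd2 h)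
      · exact h
    · rintro ⟨hS, hc⟩
      refine ⟨⟨hS.trans ?_, hc⟩, h1Y.symm.mono_left hS, h2Y.symm.mono_left hS⟩
      intro x hx; simp [hU, Finset.mem_union, hx]
  -- cardinalities
  have hUc : U.card = m + q + 2 := by
    rw [hU, Finset.card_union_of_disjoint (Finset.disjoint_union_left.mpr ⟨h1Y, h2Y⟩),
      Finset.card_union_of_disjoint h12, hX₁, hX₂, hY]; ring
  have h2Yc : (X₂ ∪ Y).card = m + q := by
    rw [Finset.card_union_of_disjoint h2Y, hX₂, hY]; ring
  have h1Yc : (X₁ ∪ Y).card = m + 2 := by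
    rw [Finset.card_union_of_disjoint h1Y, hX₁, hY]; ring
  have cA : A.card = (m+q+2).choose 4 := by rw [hA, Finset.card_powersetCard, hUc]
  have cP : (A.filter (fun S => ¬ (S ∩ X₁).Nonempty)).card = (m+q).choose 4 := by
    rw [hP, Finset.card_powersetCard, h2Yc]
  have cQ : (A.filter (fun S => ¬ (S ∩ X₂).Nonempty)).card = (m+2).choose 4 := by
    rw [hQ, Finset.card_powersetCard, h1Yc]
  have cPQ : (A.filter (fun S => ¬ (S ∩ X₁).Nonempty ∧ ¬ (S ∩ X₂).Nonempty)).card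
      = m.choose 4 := by
    rw [hPQ, Finset.card_powersetCard, hY]
  -- inclusion-exclusion
  have hsplit : (A.filter (fun S => (S ∩ X₁).Nonempty ∧ (S ∩ X₂).Nonempty)).card
      + (A.filter (fun S => ¬ ((S ∩ X₁).Nonempty ∧ (S ∩ X₂).Nonempty))).card = A.card :=
    Finset.card_filter_add_card_filter_not _
  have hunion : A.filter (fun S => ¬ ((S ∩ X₁).Nonempty ∧ (S ∩ X₂).Nonempty))
      = A.filter (fun S => ¬ (S ∩ X₁).Nonempty) ∪ A.filter (fun S => ¬ (S ∩ X₂).Nonempty) := by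
    ext S; simp only [Finset.mem_filter, Finset.mem_union]; tauto
  have hinter : A.filter (fun S => ¬ (S ∩ X₁).Nonempty) ∩ A.filter (fun S => ¬ (S ∩ X₂).Nonempty)
      = A.filter (fun S => ¬ (S ∩ X₁).Nonempty ∧ ¬ (S ∩ X₂).Nonempty) := by
    ext S; simp only [Finset.mem_filter, Finset.mem_inter]; tauto
  have hie := Finset.card_union_add_card_inter
    (A.filter (fun S => ¬ (S ∩ X₁).Nonempty)) (A.filter (fun S => ¬ (S ∩ X₂).Nonempty))
  rw [hinter, cP, cQ, cPQ] at hie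
  rw [← hunion] at hie
  have := key_id m q
  omega
end

section
/- The number D(m,n) of lattice paths from (0,0) to (m,n) using steps (1,0), (0,1), (1,1) (the Delannoy number) equals the number of 2n-insets of a set with n main blocks each of size 2 and an additional block of size m; equivalently D(m,n) = Σ_{i=0}^{m} 2^i C(m,i) C(n,i). -/
/-- The Delannoy number `delannoy m n`: the number of lattice paths from `(0,0)` to `(m,n)`
using steps `(1,0)`, `(0,1)` and `(1,1)`, defined via the standard recurrence
`D(m,0) = D(0,n) = 1`, `D(m+1,n+1) = D(m,n+1) + D(m+1,n) + D(m,n)`. -/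
def delannoy : ℕ → ℕ → ℕ
  | _, 0 => 1
  | 0, _ + 1 => 1
  | m + 1, n + 1 => delannoy m (n + 1) + delannoy (m + 1) n + delannoy m n
  termination_by m n => (m, n)

namespace DelannoyAux
open Finset

def zchoose (m : ℕ) (k : ℤ) : ℕ := if 0 ≤ k then m.choose k.toNat else 0

def P2 (n m : ℕ) (k : ℤ) : ℕ :=
  Fintype.card {fB : (Fin n → Finset (Fin 2)) × Finset (Fin m) //
    ((∑ i, ((fB.1 i).card : ℤ)) + (fB.2.card : ℤ) = n + k) ∧ ∀ i, (fB.1 i).Nonempty}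

def Zf (n m : ℕ) (k : ℤ) : ℕ :=
  ∑ j ∈ range (n + 1), n.choose j * 2 ^ (n - j) * zchoose m (k - j)

def Ff (m n : ℕ) : ℕ := ∑ i ∈ range (m + 1), 2 ^ i * m.choose i * n.choose i

lemma card_finset_card_eq (m : ℕ) (k : ℤ) :
    Fintype.card {B : Finset (Fin m) // (B.card : ℤ) = k} = zchoose m k := by
  rw [Fintype.card_subtype]
  unfold zchoose
  split_ifs with h
  · have h1 : (univ.filter fun B : Finset (Fin m) => (B.card : ℤ) = k)
        = (univ : Finset (Fin m)).powerset.filter fun B => B.card = k.toNat := by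
      rw [powerset_univ]
      apply filter_congr
      intro B _
      constructor
      · intro hb; omega
      · intro hb; omega
    rw [h1, ← powersetCard_eq_filter, card_powersetCard, card_univ, Fintype.card_fin]
  · rw [filter_eq_empty_iff.mpr, card_empty]
    intro B _
    intro hB
    omega

lemma P2_zero (m : ℕ) (k : ℤ) : P2 0 m k = zchoose m k := by
  rw [← card_finset_card_eq m k]
  apply Fintype.card_congr
  refine ⟨fun x => ⟨x.1.2, by have := x.2.1; simpa using this⟩,
          fun B => ⟨(fun i => i.elim0, B.1), by simp [B.2]⟩, ?_, ?_⟩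
  · rintro ⟨⟨f, B⟩, h⟩
    ext i : 3
    · exact i.elim0
    · simp
  · rintro ⟨B, h⟩
    rfl

lemma P2_succ (n m : ℕ) (k : ℤ) :
    P2 (n + 1) m k = 2 * P2 n m k + P2 n m (k - 1) := by
  have key : P2 (n + 1) m k = ∑ t : Finset (Fin 2),
      Fintype.card {gB : (Fin n → Finset (Fin 2)) × Finset (Fin m) //
        t.Nonempty ∧ ((t.card : ℤ) + (∑ i, ((gB.1 i).card : ℤ)) + (gB.2.card : ℤ) = (n + 1 : ℕ) + k)
          ∧ ∀ i, (gB.1 i).Nonempty} := by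
    rw [P2, ← Fintype.card_sigma]
    apply Fintype.card_congr
    refine ⟨fun x => ⟨x.1.1 0, ⟨((Fin.tail x.1.1), x.1.2), ?_⟩⟩,
            fun y => ⟨(Fin.cons y.1 y.2.1.1, y.2.1.2), ?_⟩, ?_, ?_⟩
    · obtain ⟨⟨f, B⟩, h1, h2⟩ := x
      refine ⟨h2 0, ?_, fun i => h2 i.succ⟩
      simp only [Fin.sum_univ_succ] at h1
      simp only [Fin.tail]
      push_cast at h1 ⊢
      linarith
    · obtain ⟨t, ⟨⟨g, B⟩, ht, h1, h2⟩⟩ := y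
      refine ⟨?_, fun i => Fin.cases (by simpa using ht) (fun j => by simpa using h2 j) i⟩
      simp only [Fin.sum_univ_succ, Fin.cons_zero, Fin.cons_succ]
      push_cast at h1 ⊢
      linarith
    · rintro ⟨⟨f, B⟩, h⟩
      simp [Fin.cons_self_tail]
    · rintro ⟨t, ⟨⟨g, B⟩, h⟩⟩
      simp [Fin.tail_cons]
      exact HEq.rfl
  rw [key]
  have huniv : (univ : Finset (Finset (Fin 2))) = {∅, {0}, {1}, {0, 1}} := by decide
  have hgen : ∀ t : Finset (Fin 2), t.Nonempty →
      Fintype.card {gB : (Fin n → Finset (Fin 2)) × Finset (Fin m) //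
        t.Nonempty ∧ ((t.card : ℤ) + (∑ i, ((gB.1 i).card : ℤ)) + (gB.2.card : ℤ) = (n + 1 : ℕ) + k)
          ∧ ∀ i, (gB.1 i).Nonempty} = P2 n m (k - (t.card - 1)) := by
    intro t ht
    rw [P2]
    apply Fintype.card_congr
    apply Equiv.subtypeEquivRight
    intro gB
    constructor
    · rintro ⟨-, h1, h2⟩
      exact ⟨by push_cast at h1 ⊢; linarith, h2⟩
    · rintro ⟨h1, h2⟩
      exact ⟨ht, by push_cast at h1 ⊢; linarith, h2⟩
  have h0 : Fintype.card {gB : (Fin n → Finset (Fin 2)) × Finset (Fin m) //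
        (∅ : Finset (Fin 2)).Nonempty ∧ (((∅ : Finset (Fin 2)).card : ℤ) + (∑ i, ((gB.1 i).card : ℤ)) + (gB.2.card : ℤ) = (n + 1 : ℕ) + k)
          ∧ ∀ i, (gB.1 i).Nonempty} = 0 :=
    Fintype.card_eq_zero_iff.mpr ⟨fun x => not_nonempty_empty x.2.1⟩
  rw [huniv]
  rw [sum_insert (by decide), sum_insert (by decide), sum_insert (by decide), sum_singleton]
  rw [h0, hgen {0} ⟨0, by decide⟩, hgen {1} ⟨1, by decide⟩, hgen {0, 1} ⟨0, by decide⟩]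
  norm_num
  ring

lemma card_decomp (n m : ℕ) (S : Finset ((Σ _ : Fin n, Fin 2) ⊕ Fin m)) :
    S.card = ∑ i, (univ.filter fun x : Fin 2 => Sum.inl ⟨i, x⟩ ∈ S).card + S.toRight.card := by
  rw [← Finset.card_toLeft_add_card_toRight]
  congr 1
  have : S.toLeft = univ.sigma (fun i => univ.filter fun x : Fin 2 => Sum.inl ⟨i, x⟩ ∈ S) := by
    ext ⟨i, x⟩
    simp
  rw [this, Finset.card_sigma]

lemma insetCount_eq_P2 (n m : ℕ) (k : ℤ) :
    insetCount n m k (fun _ => 2) = P2 n m k := by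
  rw [insetCount, P2, ← Fintype.card_subtype]
  apply Fintype.card_congr
  refine ⟨fun S => ⟨((fun i => univ.filter fun x : Fin 2 => Sum.inl ⟨i, x⟩ ∈ S.1), S.1.toRight), ?_⟩,
          fun fB => ⟨(univ.sigma (fun i => fB.1.1 i)).disjSum fB.1.2, ?_⟩, ?_, ?_⟩
  · obtain ⟨S, h1, h2⟩ := S
    constructor
    · rw [card_decomp] at h1
      push_cast at h1 ⊢
      linarith
    · intro i
      obtain ⟨x, hx⟩ := h2 i
      exact ⟨x, by simp [hx]⟩
  · obtain ⟨⟨f, B⟩, h1, h2⟩ := fB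
    constructor
    · rw [Finset.card_disjSum, Finset.card_sigma]
      push_cast at h1 ⊢
      linarith
    · intro i
      obtain ⟨x, hx⟩ := h2 i
      exact ⟨x, by simp [hx]⟩
  · rintro ⟨S, h⟩
    apply Subtype.ext
    ext z
    rcases z with ⟨i, x⟩ | y
    · simp
    · simp
  · rintro ⟨⟨f, B⟩, h⟩
    apply Subtype.ext
    refine Prod.ext ?_ ?_
    · funext i
      ext x
      simp
    · ext y
      simp

lemma Zf_succ (n m : ℕ) (k : ℤ) : Zf (n + 1) m k = 2 * Zf n m k + Zf n m (k - 1) := by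
  have step1 : Zf (n + 1) m k
      = ∑ j ∈ range (n + 1), ((n.choose j + n.choose (j + 1)) * 2 ^ (n - j) * zchoose m (k - 1 - j))
        + 2 ^ (n + 1) * zchoose m k := by
    rw [Zf, sum_range_succ']
    congr 1
    · apply sum_congr rfl
      intro j hj
      rw [Nat.choose_succ_succ, Nat.succ_sub_succ,
        show (k - ↑(j + 1) : ℤ) = k - 1 - ↑j by push_cast; ring]
    · simp
  have step2 : ∀ j ∈ range (n + 1), (n.choose j + n.choose (j + 1)) * 2 ^ (n - j) * zchoose m (k - 1 - j)
      = n.choose j * 2 ^ (n - j) * zchoose m (k - 1 - j)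
        + n.choose (j + 1) * 2 ^ (n - j) * zchoose m (k - 1 - j) := fun j _ => by ring
  rw [step1, sum_congr rfl step2, sum_add_distrib]
  have step3 : ∑ j ∈ range (n + 1), n.choose j * 2 ^ (n - j) * zchoose m (k - 1 - j)
      = Zf n m (k - 1) := rfl
  have step4 : ∑ j ∈ range (n + 1), n.choose (j + 1) * 2 ^ (n - j) * zchoose m (k - 1 - j)
        + 2 ^ (n + 1) * zchoose m k = 2 * Zf n m k := by
    rw [Zf, mul_sum, sum_range_succ' (fun j => 2 * (n.choose j * 2 ^ (n - j) * zchoose m (k - j))) n]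
    congr 1
    · rw [sum_range_succ, Nat.choose_succ_self, zero_mul, zero_mul, add_zero]
      apply sum_congr rfl
      intro j hj
      simp only [mem_range] at hj
      rw [show (k - ↑(j + 1) : ℤ) = k - 1 - ↑j by push_cast; ring,
        show n - j = (n - (j + 1)) + 1 by omega, pow_succ]
      ring
    · simp [pow_succ]
      ring
  rw [step3, ← step4]
  ring

lemma P2_eq_Zf (n m : ℕ) (k : ℤ) : P2 n m k = Zf n m k := by
  induction n generalizing k with
  | zero => rw [P2_zero]; simp [Zf]
  | succ n ih => rw [P2_succ, Zf_succ, ih, ih]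

lemma Zf_at_n (n m : ℕ) :
    Zf n m n = ∑ i ∈ range (n + 1), 2 ^ i * m.choose i * n.choose i := by
  have e1 : Zf n m n = ∑ j ∈ range (n + 1), n.choose j * 2 ^ (n - j) * m.choose (n - j) := by
    apply sum_congr rfl
    intro j hj
    simp only [mem_range] at hj
    congr 1
    rw [zchoose, if_pos (by omega : (0:ℤ) ≤ (n:ℤ) - j)]
    congr 1
    omega
  rw [e1, ← Finset.sum_range_reflect]
  apply sum_congr rfl
  intro i hi
  simp only [mem_range] at hi
  rw [show n + 1 - 1 - i = n - i by omega, show n - (n - i) = i by omega,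
    Nat.choose_symm (by omega : i ≤ n)]
  ring

lemma sum_range_ext (m n a b : ℕ) (hn : n < a) (hab : a ≤ b) :
    ∑ i ∈ range a, 2 ^ i * m.choose i * n.choose i
      = ∑ i ∈ range b, 2 ^ i * m.choose i * n.choose i := by
  apply sum_subset (range_subset_range.mpr hab)
  intro i _ hi
  simp only [mem_range, not_lt] at hi
  rw [Nat.choose_eq_zero_of_lt (by omega : n < i), mul_zero]

lemma sum_swap_range (m n : ℕ) :
    ∑ i ∈ range (n + 1), 2 ^ i * m.choose i * n.choose i
      = ∑ i ∈ range (m + 1), 2 ^ i * m.choose i * n.choose i := by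
  rw [sum_range_ext m n (n + 1) (m + n + 2) (by omega) (by omega)]
  rw [show ∑ i ∈ range (m + 1), 2 ^ i * m.choose i * n.choose i
      = ∑ i ∈ range (m + n + 2), 2 ^ i * m.choose i * n.choose i from ?_]
  · apply sum_subset (range_subset_range.mpr (by omega))
    intro i _ hi
    simp only [mem_range, not_lt] at hi
    rw [Nat.choose_eq_zero_of_lt (by omega : m < i), mul_zero, zero_mul]

lemma sum_range_ext' (m n a b : ℕ) (hm : m < a) (hab : a ≤ b) :
    ∑ i ∈ range a, 2 ^ i * m.choose i * n.choose i
      = ∑ i ∈ range b, 2 ^ i * m.choose i * n.choose i := by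
  apply sum_subset (range_subset_range.mpr hab)
  intro i _ hi
  simp only [mem_range, not_lt] at hi
  rw [Nat.choose_eq_zero_of_lt (by omega : m < i), mul_zero, zero_mul]

lemma Ff_rec (m n : ℕ) : Ff (m + 1) (n + 1) = Ff m (n + 1) + Ff (m + 1) n + Ff m n := by
  have h1 : Ff m (n + 1) = ∑ i ∈ range (m + 2), 2 ^ i * m.choose i * (n + 1).choose i :=
    sum_range_ext' m (n + 1) (m + 1) (m + 2) (by omega) (by omega)
  have h2 : Ff m n = ∑ i ∈ range (m + 2), 2 ^ i * m.choose i * n.choose i :=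
    sum_range_ext' m n (m + 1) (m + 2) (by omega) (by omega)
  rw [h1, h2, Ff, Ff, show m + 1 + 1 = m + 2 by omega]
  set K := m + 2 with hK
  set c : ℕ → ℕ := fun i => if i = 0 then 0 else 2 ^ i * m.choose (i - 1) * n.choose (i - 1) with hc
  have claim1 : ∀ i, 2 ^ i * (m + 1).choose i * (n + 1).choose i + 2 * (2 ^ i * m.choose i * n.choose i)
      = (2 ^ i * m.choose i * (n + 1).choose i + 2 ^ i * (m + 1).choose i * n.choose i
          + 2 ^ i * m.choose i * n.choose i) + c i := by
    intro i
    cases i with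
    | zero => simp [hc]
    | succ j =>
      simp only [hc, Nat.succ_sub_one, if_neg (Nat.succ_ne_zero j)]
      rw [Nat.choose_succ_succ m j, Nat.choose_succ_succ n j]
      ring
  have claim2 : ∑ i ∈ range K, c i = ∑ i ∈ range K, 2 * (2 ^ i * m.choose i * n.choose i) := by
    have lhs : ∑ i ∈ range (m + 1 + 1), c i = ∑ j ∈ range (m + 1), c (j + 1) + c 0 :=
      sum_range_succ' c (m + 1)
    have rhs : ∑ i ∈ range (m + 1 + 1), 2 * (2 ^ i * m.choose i * n.choose i)
        = ∑ i ∈ range (m + 1), 2 * (2 ^ i * m.choose i * n.choose i)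
          + 2 * (2 ^ (m + 1) * m.choose (m + 1) * n.choose (m + 1)) :=
      sum_range_succ _ (m + 1)
    rw [hK, show m + 2 = m + 1 + 1 by omega, lhs, rhs, Nat.choose_succ_self m]
    simp only [hc, if_neg (Nat.succ_ne_zero _), Nat.succ_sub_one, if_pos rfl, add_zero, mul_zero, zero_mul]
    apply sum_congr rfl
    intro j _
    rw [pow_succ]
    ring
  have big : ∑ i ∈ range K, (2 ^ i * (m + 1).choose i * (n + 1).choose i
        + 2 * (2 ^ i * m.choose i * n.choose i))
      = ∑ i ∈ range K, ((2 ^ i * m.choose i * (n + 1).choose i + 2 ^ i * (m + 1).choose i * n.choose i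
          + 2 ^ i * m.choose i * n.choose i) + c i) :=
    sum_congr rfl fun i _ => claim1 i
  rw [sum_add_distrib, sum_add_distrib, claim2] at big
  have := Nat.add_right_cancel big
  rw [this, sum_add_distrib, sum_add_distrib]

lemma delannoy_m_zero (m : ℕ) : delannoy m 0 = 1 := by
  cases m <;> rw [delannoy]

lemma delannoy_eq_Ff (m n : ℕ) : delannoy m n = Ff m n := by
  induction m generalizing n with
  | zero =>
    cases n with
    | zero => simp [delannoy_m_zero, Ff]
    | succ n => rw [delannoy]; simp [Ff]
  | succ m ihm =>
    induction n with
    | zero =>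
      rw [delannoy_m_zero, Ff]
      rw [Finset.sum_eq_single 0]
      · simp
      · intro i _ hi
        rw [Nat.choose_eq_zero_of_lt (Nat.pos_of_ne_zero hi), mul_zero]
      · simp
    | succ n ihn =>
      rw [delannoy, Ff_rec, ihm, ihm, ihn]

end DelannoyAux

/-- The Delannoy number `D(m,n)` equals the number of `2n`-insets of a set with `n` main
blocks of size 2 and an additional block of size `m`; equivalently
`D(m,n) = ∑_{i=0}^{m} 2^i C(m,i) C(n,i)`. -/
theorem delannoy_eq_insetCount (m n : ℕ) :
    delannoy m n = insetCount n m (n : ℤ) (fun _ => 2) ∧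
    delannoy m n = ∑ i ∈ Finset.range (m + 1), 2 ^ i * m.choose i * n.choose i := by
  have hform : delannoy m n = ∑ i ∈ Finset.range (m + 1), 2 ^ i * m.choose i * n.choose i :=
    DelannoyAux.delannoy_eq_Ff m n
  refine ⟨?_, hform⟩
  rw [DelannoyAux.insetCount_eq_P2, DelannoyAux.P2_eq_Zf, DelannoyAux.Zf_at_n,
    DelannoyAux.sum_swap_range]
  exact hform
end

section
/- The number of integer solutions (x_1,...,x_n) of |x_1| + |x_2| + ... + |x_n| ≤ m equals Σ_{i=0}^{m} 2^i C(m,i) C(n,i), and the number of integer solutions of |x_1| + ... + |x_n| = m (for m ≥ 1) equals Σ_{i=0}^{m} 2^i C(m,i) C(n,i) − Σ_{i=0}^{m−1} 2^i C(m−1,i) C(n,i). -/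
open Finset

/-- The set of `x : Fin n → ℤ` with `∑ |x i| ≤ r`, as a Finset inside the box. -/
noncomputable def cubeBall (n : ℕ) (r : ℤ) : Finset (Fin n → ℤ) :=
  (Fintype.piFinset fun _ : Fin n => Finset.Icc (-r) r).filter fun x => ∑ i, |x i| ≤ r

lemma mem_cubeBall {n : ℕ} {r : ℤ} {x : Fin n → ℤ} :
    x ∈ cubeBall n r ↔ ∑ i, |x i| ≤ r := by
  simp only [cubeBall, Finset.mem_filter, Fintype.mem_piFinset, Finset.mem_Icc, ← abs_le]
  refine ⟨fun h => h.2, fun h => ⟨fun i => le_trans ?_ h, h⟩⟩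
  exact Finset.single_le_sum (f := fun i => |x i|) (fun j _ => abs_nonneg _) (Finset.mem_univ i)

lemma cubeBall_zero (r : ℤ) (hr : 0 ≤ r) : (cubeBall 0 r).card = 1 := by
  have : cubeBall 0 r = {fun i => (0:ℤ)} := by
    ext x
    simp [mem_cubeBall, Subsingleton.elim x fun i => (0:ℤ), hr]
  simp [this]

lemma cubeBall_succ (n : ℕ) (r : ℤ) :
    (cubeBall (n+1) r).card = ∑ k ∈ Finset.Icc (-r) r, (cubeBall n (r - |k|)).card := by
  rw [Finset.card_eq_sum_card_fiberwise (f := fun x => x 0) (t := Finset.Icc (-r) r)]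
  · refine Finset.sum_congr rfl fun k _ => ?_
    refine Finset.card_bij' (fun x _ => Fin.tail x) (fun y _ => Fin.cons k y) ?_ ?_ ?_ ?_
    · intro x hx
      simp only [Finset.mem_filter, mem_cubeBall] at hx ⊢
      obtain ⟨hx, hx0⟩ := hx
      rw [Fin.sum_univ_succ, hx0] at hx
      show ∑ i : Fin n, |x i.succ| ≤ r - |k|
      linarith
    · intro y hy
      rw [mem_cubeBall] at hy
      simp only [Finset.mem_filter, mem_cubeBall, Fin.sum_univ_succ, Fin.cons_zero,
        Fin.cons_succ]
      refine ⟨by linarith, by trivial⟩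
    · intro x hx
      simp only [Finset.mem_filter] at hx
      funext i
      refine Fin.cases ?_ (fun j => ?_) i
      · exact hx.2.symm
      · rfl
    · intro y hy
      simp
  · intro x hx
    rw [Finset.mem_coe, mem_cubeBall] at hx
    rw [Finset.mem_coe, Finset.mem_Icc, ← abs_le]
    refine le_trans ?_ hx
    exact Finset.single_le_sum (f := fun i => |x i|) (fun j _ => abs_nonneg _) (Finset.mem_univ 0)

lemma sum_Icc_abs (m : ℕ) (f : ℕ → ℕ) :
    ∑ k ∈ Finset.Icc (-(m:ℤ)) m, f k.natAbs = f 0 + 2 * ∑ j ∈ Finset.range m, f (j+1) := by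
  induction m with
  | zero => simp
  | succ m ih =>
    have hIcc : Finset.Icc (-((m+1:ℕ):ℤ)) ((m+1:ℕ):ℤ)
        = insert (-((m+1:ℕ):ℤ)) (insert ((m+1:ℕ):ℤ) (Finset.Icc (-(m:ℕ):ℤ) (m:ℕ))) := by
      ext k
      simp only [Finset.mem_Icc, Finset.mem_insert]
      push_cast
      omega
    rw [hIcc, Finset.sum_insert, Finset.sum_insert, ih, Finset.sum_range_succ]
    · have h1 : ((-((m+1:ℕ):ℤ)).natAbs) = m + 1 := by omega
      have h2 : (((m+1:ℕ):ℤ)).natAbs = m + 1 := by omega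
      rw [h1, h2]
      ring
    · simp only [Finset.mem_Icc]
      push_cast
      omega
    · simp only [Finset.mem_insert, Finset.mem_Icc]
      push_cast
      omega

/-- The Delannoy-type sum. -/
def Dn (n m : ℕ) : ℕ := ∑ i ∈ Finset.range (m + 1), 2 ^ i * m.choose i * n.choose i

lemma hockey (m i : ℕ) : ∑ j ∈ Finset.range m, j.choose i = m.choose (i+1) := by
  induction m with
  | zero => simp
  | succ m ih => rw [Finset.sum_range_succ, ih, Nat.choose_succ_succ, Nat.add_comm]

lemma Dn_succ (n m : ℕ) : Dn (n+1) m = Dn n m + 2 * ∑ j ∈ Finset.range m, Dn n j := by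
  have hswap : 2 * ∑ j ∈ Finset.range m, Dn n j
      = ∑ i ∈ Finset.range m, 2 ^ (i+1) * m.choose (i+1) * n.choose i := by
    unfold Dn
    have hext : ∀ j ∈ Finset.range m,
        ∑ i ∈ Finset.range (j+1), 2 ^ i * j.choose i * n.choose i
        = ∑ i ∈ Finset.range m, 2 ^ i * j.choose i * n.choose i := by
      intro j hj
      rw [Finset.mem_range] at hj
      refine Finset.sum_subset (Finset.range_subset_range.2 (by omega)) ?_
      intro i _ hi
      rw [Finset.mem_range, not_lt] at hi
      rw [Nat.choose_eq_zero_of_lt (by omega)]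
      ring
    rw [Finset.sum_congr rfl hext, Finset.sum_comm]
    rw [Finset.mul_sum]
    refine Finset.sum_congr rfl fun i _ => ?_
    have h : ∑ j ∈ Finset.range m, 2 ^ i * j.choose i * n.choose i
        = m.choose (i+1) * (2 ^ i * n.choose i) := by
      rw [show ∑ j ∈ Finset.range m, 2 ^ i * j.choose i * n.choose i
          = ∑ j ∈ Finset.range m, (j.choose i) * (2 ^ i * n.choose i) from
        Finset.sum_congr rfl fun j _ => by ring]
      rw [← Finset.sum_mul, hockey]
    rw [h]
    ring
  rw [hswap]
  unfold Dn
  rw [Finset.sum_range_succ' (fun i => 2 ^ i * m.choose i * n.choose i) m,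
    Finset.sum_range_succ' (fun i => 2 ^ i * m.choose i * (n+1).choose i) m]
  simp only [Nat.choose_zero_right, pow_zero, one_mul, mul_one]
  have hL : ∑ i ∈ Finset.range m, 2 ^ (i+1) * m.choose (i+1) * (n+1).choose (i+1)
      = ∑ i ∈ Finset.range m, (2 ^ (i+1) * m.choose (i+1) * n.choose i
          + 2 ^ (i+1) * m.choose (i+1) * n.choose (i+1)) := by
    refine Finset.sum_congr rfl fun i _ => ?_
    rw [Nat.choose_succ_succ]
    ring
  rw [hL, Finset.sum_add_distrib]
  omega

lemma cubeBall_card (n m : ℕ) : (cubeBall n (m:ℤ)).card = Dn n m := by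
  induction n generalizing m with
  | zero =>
    rw [cubeBall_zero _ (by positivity)]
    unfold Dn
    rw [Finset.sum_eq_single_of_mem 0 (Finset.mem_range.2 (by omega))]
    · simp
    · intro i _ hi
      rw [Nat.choose_eq_zero_of_lt (Nat.pos_of_ne_zero hi)]
      ring
  | succ n ih =>
    rw [cubeBall_succ]
    have h1 : ∑ k ∈ Finset.Icc (-(m:ℤ)) m, (cubeBall n ((m:ℤ) - |k|)).card
        = ∑ k ∈ Finset.Icc (-(m:ℤ)) m, (cubeBall n ((m:ℤ) - (k.natAbs:ℕ))).card := by
      refine Finset.sum_congr rfl fun k _ => ?_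
      rw [Int.abs_eq_natAbs]
    have h1' := sum_Icc_abs m (fun t : ℕ => (cubeBall n ((m:ℤ) - t)).card)
    rw [h1, h1']
    simp only [Nat.cast_zero, sub_zero, ih]
    have h2 : ∑ j ∈ Finset.range m, (cubeBall n ((m:ℤ) - ((j:ℕ)+1:ℕ))).card
        = ∑ j ∈ Finset.range m, Dn n (m - 1 - j) := by
      refine Finset.sum_congr rfl fun j hj => ?_
      rw [Finset.mem_range] at hj
      have : ((m:ℤ) - ((j:ℕ)+1:ℕ)) = ((m - 1 - j : ℕ) : ℤ) := by push_cast; omega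
      rw [this, ih]
    rw [h2, Finset.sum_range_reflect (fun j => Dn n j) m, Dn_succ]

lemma filter_box_eq (n m : ℕ) (r : ℤ) (hr : r ≤ m) :
    (Fintype.piFinset fun _ : Fin n => Finset.Icc (-(m:ℤ)) (m:ℤ)).filter
        (fun x => ∑ i, |x i| ≤ r)
      = cubeBall n r := by
  ext x
  rw [mem_cubeBall]
  simp only [Finset.mem_filter, Fintype.mem_piFinset, Finset.mem_Icc, ← abs_le]
  refine ⟨fun h => h.2, fun h => ⟨fun i => ?_, h⟩⟩
  refine le_trans (le_trans ?_ h) hr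
  exact Finset.single_le_sum (f := fun i => |x i|) (fun j _ => abs_nonneg _) (Finset.mem_univ i)


/-- Crystal ball and coordination sequences of the cubic lattice `ℤⁿ`:
the number of integer solutions of `|x₁| + ⋯ + |xₙ| ≤ m` equals
`∑_{i=0}^{m} 2^i C(m,i) C(n,i)`, and for `m ≥ 1` the number of integer solutions of
`|x₁| + ⋯ + |xₙ| = m` equals
`∑_{i=0}^{m} 2^i C(m,i) C(n,i) - ∑_{i=0}^{m-1} 2^i C(m-1,i) C(n,i)`.
(Every solution satisfies `|xᵢ| ≤ m`, so solutions are counted inside the box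
`[-m, m]ⁿ`.) -/
theorem cubic_lattice_solutions (m n : ℕ) :
    ((Fintype.piFinset (fun _ : Fin n => Finset.Icc (-(m : ℤ)) (m : ℤ))).filter
        (fun x => ∑ i, |x i| ≤ (m : ℤ))).card
      = ∑ i ∈ Finset.range (m + 1), 2 ^ i * m.choose i * n.choose i ∧
    (1 ≤ m →
      ((Fintype.piFinset (fun _ : Fin n => Finset.Icc (-(m : ℤ)) (m : ℤ))).filter
          (fun x => ∑ i, |x i| = (m : ℤ))).card
        = ∑ i ∈ Finset.range (m + 1), 2 ^ i * m.choose i * n.choose i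
          - ∑ i ∈ Finset.range m, 2 ^ i * (m - 1).choose i * n.choose i) := by
  constructor
  · exact cubeBall_card n m
  · intro hm
    set box := Fintype.piFinset (fun _ : Fin n => Finset.Icc (-(m : ℤ)) (m : ℤ)) with hbox
    have hsplit : box.filter (fun x => ∑ i, |x i| ≤ (m:ℤ))
        = box.filter (fun x => ∑ i, |x i| = (m:ℤ))
          ∪ box.filter (fun x => ∑ i, |x i| ≤ (m:ℤ) - 1) := by
      ext x
      simp only [Finset.mem_filter, Finset.mem_union]
      constructor
      · rintro ⟨hb, hs⟩
        rcases eq_or_lt_of_le hs with h | h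
        · exact Or.inl ⟨hb, h⟩
        · exact Or.inr ⟨hb, by omega⟩
      · rintro (⟨hb, hs⟩ | ⟨hb, hs⟩) <;> exact ⟨hb, by omega⟩
    have hdisj : Disjoint (box.filter (fun x => ∑ i, |x i| = (m:ℤ)))
        (box.filter (fun x => ∑ i, |x i| ≤ (m:ℤ) - 1)) := by
      rw [Finset.disjoint_left]
      intro x hx hx'
      simp only [Finset.mem_filter] at hx hx'
      omega
    have hm1 : ((m:ℤ) - 1) = ((m - 1 : ℕ) : ℤ) := by omega
    have hsmall : box.filter (fun x => ∑ i, |x i| ≤ (m:ℤ) - 1) = cubeBall n ((m-1:ℕ):ℤ) := by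
      rw [hbox, ← hm1]
      exact filter_box_eq n m ((m:ℤ) - 1) (by omega)
    have hcard : (box.filter (fun x => ∑ i, |x i| ≤ (m:ℤ))).card
        = (box.filter (fun x => ∑ i, |x i| = (m:ℤ))).card + Dn n (m-1) := by
      rw [hsplit, Finset.card_union_of_disjoint hdisj, hsmall, cubeBall_card]
    have hc : (box.filter (fun x => ∑ i, |x i| ≤ (m:ℤ))).card = Dn n m := cubeBall_card n m
    have hDn1 : Dn n (m-1) = ∑ i ∈ Finset.range m, 2 ^ i * (m - 1).choose i * n.choose i := by
      unfold Dn
      congr 2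
      exact Nat.succ_pred_eq_of_pos hm
    have := hcard
    rw [hc] at this
    have hgoal : (box.filter (fun x => ∑ i, |x i| = (m:ℤ))).card = Dn n m - Dn n (m-1) := by
      clear * - this
      generalize hE : (box.filter (fun x => ∑ i, |x i| = (m:ℤ))).card = E at this ⊢
      clear * - this
      omega
    rw [hgoal, hDn1]
    rfl
end
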